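/- Let d ≥ 1 and k ≥ 0 be integers and let α, β, c > 0 satisfy α > d and αβ > (k+1)d. Then ∫_{ℝ^d} ∫₁^∞ (1 − exp(−c w / ‖x‖^α)) · w^{kd/α} · β w^{−β−1} dw dx = θ_d · (αβ/(αβ − (k+1)d)) · c^{d/α} · Γ(1 − d/α). In particular, this weighted integral is bounded by a constant multiple of c^{d/α}. -/

import Mathlib

open MeasureTheory Set Real Filter

lemma one_sub_exp_neg_nonneg {t : ℝ} (ht : 0 ≤ t) : 0 ≤ 1 - Real.exp (-t) := by
  have : Real.exp (-t) ≤ 1 := Real.exp_le_one_iff.mpr (by linarith)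
  linarith

lemma one_sub_exp_neg_le_self {t : ℝ} : 1 - Real.exp (-t) ≤ t := by
  have := Real.add_one_le_exp (-t)
  linarith

lemma one_sub_exp_neg_le_one {t : ℝ} (ht : 0 ≤ t) : 1 - Real.exp (-t) ≤ 1 := by
  have : 0 ≤ Real.exp (-t) := (Real.exp_pos _).le
  linarith

lemma lemJint {s : ℝ} (hs0 : 0 < s) (hs1 : s < 1) :
    IntegrableOn (fun v : ℝ => (1 - Real.exp (-v)) * v ^ (-s - 1)) (Ioi 0) := by
  have hmeas : Measurable (fun v : ℝ => (1 - Real.exp (-v)) * v ^ (-s - 1)) :=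
    by fun_prop
  have h1 : IntegrableOn (fun v : ℝ => (1 - Real.exp (-v)) * v ^ (-s - 1)) (Ioc 0 1) := by
    have hg : IntegrableOn (fun v : ℝ => v ^ (-s)) (Ioc 0 1) := by
      have := intervalIntegral.intervalIntegrable_rpow' (a := 0) (b := 1)
        (r := -s) (by linarith)
      rwa [intervalIntegrable_iff, uIoc_of_le zero_le_one] at this
    refine hg.mono' hmeas.aestronglyMeasurable ?_
    filter_upwards [ae_restrict_mem measurableSet_Ioc] with v hv
    have hv0 : (0:ℝ) < v := hv.1
    have h1 : 0 ≤ 1 - Real.exp (-v) := one_sub_exp_neg_nonneg hv0.le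
    have h2 : (0:ℝ) ≤ v ^ (-s - 1) := Real.rpow_nonneg hv0.le _
    rw [Real.norm_eq_abs, abs_of_nonneg (mul_nonneg h1 h2)]
    calc (1 - Real.exp (-v)) * v ^ (-s - 1) ≤ v * v ^ (-s - 1) :=
          mul_le_mul_of_nonneg_right one_sub_exp_neg_le_self h2
      _ = v ^ (-s) := by
          nth_rewrite 1 [← Real.rpow_one v]
          rw [← Real.rpow_add hv0]; norm_num
  have h2 : IntegrableOn (fun v : ℝ => (1 - Real.exp (-v)) * v ^ (-s - 1)) (Ioi 1) := by
    have hg : IntegrableOn (fun v : ℝ => v ^ (-s - 1)) (Ioi 1) :=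
      integrableOn_Ioi_rpow_of_lt (by linarith) one_pos
    refine hg.mono' hmeas.aestronglyMeasurable ?_
    filter_upwards [ae_restrict_mem measurableSet_Ioi] with v hv
    have hv0 : (0:ℝ) < v := lt_trans one_pos hv
    have h1 : 0 ≤ 1 - Real.exp (-v) := one_sub_exp_neg_nonneg hv0.le
    have h2 : (0:ℝ) ≤ v ^ (-s - 1) := Real.rpow_nonneg hv0.le _
    rw [Real.norm_eq_abs, abs_of_nonneg (mul_nonneg h1 h2)]
    calc (1 - Real.exp (-v)) * v ^ (-s - 1) ≤ 1 * v ^ (-s - 1) :=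
          mul_le_mul_of_nonneg_right (one_sub_exp_neg_le_one hv0.le) h2
      _ = v ^ (-s - 1) := one_mul _
  have : Ioc (0:ℝ) 1 ∪ Ioi 1 = Ioi 0 := Ioc_union_Ioi_eq_Ioi zero_le_one
  rw [← this]
  exact h1.union h2

lemma lemJ {s : ℝ} (hs0 : 0 < s) (hs1 : s < 1) :
    ∫ v in Ioi (0:ℝ), (1 - Real.exp (-v)) * v ^ (-s - 1) = Real.Gamma (1 - s) / s := by
  have hsne : s ≠ 0 := hs0.ne'
  set u : ℝ → ℝ := fun x => 1 - Real.exp (-x) with hu_def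
  set u' : ℝ → ℝ := fun x => Real.exp (-x) with hu'_def
  set v : ℝ → ℝ := fun x => x ^ (-s) / (-s) with hv_def
  set v' : ℝ → ℝ := fun x => x ^ (-s - 1) with hv'_def
  have hu : ∀ x ∈ Ioi (0:ℝ), HasDerivAt u (u' x) x := by
    intro x _
    simpa using ((Real.hasDerivAt_exp (-x)).comp x (hasDerivAt_neg x)).const_sub 1
  have hv : ∀ x ∈ Ioi (0:ℝ), HasDerivAt v (v' x) x := by
    intro x hx
    have := (Real.hasDerivAt_rpow_const (p := -s) (Or.inl (ne_of_gt hx))).div_const (-s)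
    have h : v' x = -s * x ^ (-s - 1) / -s := by
      show x ^ (-s - 1) = _
      rw [mul_div_cancel_left₀ _ (neg_ne_zero.mpr hsne)]
    rw [h]; exact this
  have huv' : IntegrableOn (u * v') (Ioi 0) := lemJint hs0 hs1
  have hGam : IntegrableOn (fun x : ℝ => Real.exp (-x) * x ^ (-s)) (Ioi 0) := by
    have := Real.GammaIntegral_convergent (s := 1 - s) (by linarith)
    simpa using this
  have hu'v : IntegrableOn (u' * v) (Ioi 0) :=
    (hGam.div_const (-s)).congr (Filter.Eventually.of_forall fun x => by
      simp [u', v, mul_div_assoc])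
  have huv_eq : ∀ x : ℝ, (u * v) x = -((1 - Real.exp (-x)) * x ^ (-s) / s) := by
    intro x
    simp only [Pi.mul_apply, u, v]
    rw [div_neg, mul_neg, mul_div_assoc]
  have habs : ∀ x : ℝ, 0 < x → ‖(u * v) x‖ = (1 - Real.exp (-x)) * x ^ (-s) / s := by
    intro x hx0
    rw [huv_eq, norm_neg, Real.norm_eq_abs,
      abs_of_nonneg (div_nonneg (mul_nonneg (one_sub_exp_neg_nonneg hx0.le)
        (Real.rpow_nonneg hx0.le _)) hs0.le)]
  have h_zero : Tendsto (u * v) (nhdsWithin 0 (Ioi 0)) (nhds 0) := by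
    have hb : Tendsto (fun x : ℝ => x ^ (1 - s) / s) (nhdsWithin 0 (Ioi 0)) (nhds 0) := by
      have hc : ContinuousAt (fun x : ℝ => x ^ (1 - s)) 0 :=
        Real.continuousAt_rpow_const 0 (1 - s) (Or.inr (by linarith))
      have h0 : (0:ℝ) ^ (1 - s) = 0 := Real.zero_rpow (by linarith)
      have h4 := hc.tendsto.mono_left
        (nhdsWithin_le_nhds : nhdsWithin (0:ℝ) (Ioi 0) ≤ nhds 0)
      rw [h0] at h4
      simpa using h4.div_const s
    refine squeeze_zero_norm' ?_ hb
    filter_upwards [self_mem_nhdsWithin] with x hx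
    have hx0 : (0:ℝ) < x := hx
    have h1 : 0 ≤ 1 - Real.exp (-x) := one_sub_exp_neg_nonneg hx0.le
    have h2 : (0:ℝ) ≤ x ^ (-s) := Real.rpow_nonneg hx0.le _
    rw [habs x hx0]
    have hle : (1 - Real.exp (-x)) * x ^ (-s) ≤ x * x ^ (-s) :=
      mul_le_mul_of_nonneg_right one_sub_exp_neg_le_self h2
    have hxx : x * x ^ (-s) = x ^ (1 - s) := by
      nth_rewrite 1 [← Real.rpow_one x]
      rw [← Real.rpow_add hx0]; ring_nf
    rw [← hxx]
    gcongr
  have h_infty : Tendsto (u * v) atTop (nhds 0) := by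
    have hb : Tendsto (fun x : ℝ => x ^ (-s) / s) atTop (nhds 0) := by
      simpa using (tendsto_rpow_neg_atTop hs0).div_const s
    refine squeeze_zero_norm' ?_ hb
    filter_upwards [eventually_gt_atTop 0] with x hx0
    have h1 : 0 ≤ 1 - Real.exp (-x) := one_sub_exp_neg_nonneg hx0.le
    have h2 : (0:ℝ) ≤ x ^ (-s) := Real.rpow_nonneg hx0.le _
    rw [habs x hx0]
    calc (1 - Real.exp (-x)) * x ^ (-s) / s ≤ 1 * x ^ (-s) / s := by
          gcongr; exact one_sub_exp_neg_le_one hx0.le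
      _ = x ^ (-s) / s := by rw [one_mul]
  have key := integral_Ioi_mul_deriv_eq_deriv_mul hu hv huv' hu'v h_zero h_infty
  have h1 : ∫ x in Ioi (0:ℝ), u x * v' x
      = ∫ v in Ioi (0:ℝ), (1 - Real.exp (-v)) * v ^ (-s - 1) := rfl
  have h2 : ∫ x in Ioi (0:ℝ), u' x * v x = Real.Gamma (1 - s) / (-s) := by
    have : ∀ x, u' x * v x = (Real.exp (-x) * x ^ (-s)) / (-s) := by
      intro x; simp [u', v, mul_div_assoc]
    simp_rw [this]
    rw [integral_div]
    have hg : Real.Gamma (1 - s) = ∫ a in Ioi (0:ℝ), Real.exp (-a) * a ^ (-s) := by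
      rw [Real.Gamma_eq_integral (by linarith : (0:ℝ) < 1 - s)]
      have h3 : (fun x : ℝ => Real.exp (-x) * x ^ (1 - s - 1))
          = fun x : ℝ => Real.exp (-x) * x ^ (-s) := by
        ext x; norm_num
      rw [h3]
    rw [hg]
  rw [h1] at key
  rw [key, h2]
  rw [div_neg]; ring

lemma lemI1 (d : ℕ) {α : ℝ} (hα : 0 < α) (hd0 : 0 < (d:ℝ)) (hαd : (d:ℝ) < α) :
    ∫ x in Ioi (0:ℝ), x ^ ((d:ℝ) - 1) * (1 - Real.exp (-(x ^ (-α))))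
      = Real.Gamma (1 - (d:ℝ)/α) / d := by
  set s : ℝ := (d:ℝ)/α with hs_def
  have hs0 : 0 < s := div_pos hd0 hα
  have hs1 : s < 1 := (div_lt_one hα).mpr hαd
  have hαs : s * α = (d:ℝ) := div_mul_cancel₀ _ hα.ne'
  have key := MeasureTheory.integral_comp_rpow_Ioi
    (fun v => (1 - Real.exp (-v)) * v ^ (-s - 1)) (p := -α) (by simpa using hα.ne')
  rw [lemJ hs0 hs1] at key
  have hcong : ∀ x ∈ Ioi (0:ℝ),
      (|(-α)| * x ^ (-α - 1)) • ((1 - Real.exp (-(x ^ (-α)))) * (x ^ (-α)) ^ (-s - 1))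
        = α * (x ^ ((d:ℝ) - 1) * (1 - Real.exp (-(x ^ (-α))))) := by
    intro x hx
    have hx0 : (0:ℝ) < x := hx
    have h1 : (x ^ (-α)) ^ (-s - 1) = x ^ ((-α) * (-s - 1)) :=
      (Real.rpow_mul hx0.le _ _).symm
    rw [smul_eq_mul, h1, abs_neg, abs_of_pos hα,
      show (-α) * (-s - 1) = s * α + α by ring, hαs]
    have h2 : x ^ (-α - 1) * x ^ ((d:ℝ) + α) = x ^ ((d:ℝ) - 1) := by
      rw [← Real.rpow_add hx0]; ring_nf
    rw [← h2]; ring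
  rw [setIntegral_congr_fun measurableSet_Ioi hcong, integral_const_mul] at key
  have hαne : α ≠ 0 := hα.ne'
  rw [show Real.Gamma (1 - s) / (d:ℝ) = Real.Gamma (1 - s) / s / α by rw [div_div, hαs],
    eq_div_iff hαne, mul_comm]
  exact key

lemma lemI (d : ℕ) {α : ℝ} (hα : 0 < α) (hd0 : 0 < (d:ℝ)) (hαd : (d:ℝ) < α)
    {a : ℝ} (ha : 0 < a) :
    ∫ r in Ioi (0:ℝ), r ^ ((d:ℝ) - 1) * (1 - Real.exp (-(a / r ^ α)))
      = a ^ ((d:ℝ)/α) * Real.Gamma (1 - (d:ℝ)/α) / d := by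
  set b : ℝ := a ^ (1/α) with hb_def
  have hb : 0 < b := Real.rpow_pos_of_pos ha _
  have hbα : b ^ α = a := by
    rw [hb_def, ← Real.rpow_mul ha.le, one_div_mul_cancel hα.ne', Real.rpow_one]
  have key := MeasureTheory.integral_comp_mul_left_Ioi
    (fun r => r ^ ((d:ℝ) - 1) * (1 - Real.exp (-(a / r ^ α)))) 0 hb
  rw [mul_zero] at key
  have hcong : ∀ x ∈ Ioi (0:ℝ),
      (b * x) ^ ((d:ℝ) - 1) * (1 - Real.exp (-(a / (b * x) ^ α)))
        = b ^ ((d:ℝ) - 1) * (x ^ ((d:ℝ) - 1) * (1 - Real.exp (-(x ^ (-α))))) := by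
    intro x hx
    have hx0 : (0:ℝ) < x := hx
    have h1 : (b * x) ^ ((d:ℝ) - 1) = b ^ ((d:ℝ) - 1) * x ^ ((d:ℝ) - 1) :=
      Real.mul_rpow hb.le hx0.le
    have h2 : a / (b * x) ^ α = x ^ (-α) := by
      rw [Real.mul_rpow hb.le hx0.le, hbα, Real.rpow_neg hx0.le]
      rw [div_eq_mul_inv, mul_inv]
      rw [← mul_assoc, mul_inv_cancel₀ ha.ne', one_mul]
    rw [h1, h2]; ring
  rw [setIntegral_congr_fun measurableSet_Ioi hcong, integral_const_mul,
    lemI1 d hα hd0 hαd] at key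
  have : (∫ r in Ioi (0:ℝ), r ^ ((d:ℝ) - 1) * (1 - Real.exp (-(a / r ^ α))))
      = b * (b ^ ((d:ℝ) - 1) * (Real.Gamma (1 - (d:ℝ)/α) / d)) := by
    beta_reduce at key
    rw [key, smul_eq_mul, ← mul_assoc, mul_inv_cancel₀ hb.ne', one_mul]
  rw [this]
  have hbd : b * b ^ ((d:ℝ) - 1) = a ^ ((d:ℝ)/α) := by
    nth_rewrite 1 [← Real.rpow_one b]
    rw [← Real.rpow_add hb, hb_def, ← Real.rpow_mul ha.le]
    congr 1
    field_simp
    ring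
  rw [← mul_assoc, hbd, mul_div_assoc]

lemma lemGint (d : ℕ) (hd : 1 ≤ d) {α : ℝ} (hα : 0 < α) (hαd : (d:ℝ) < α)
    {b : ℝ} (hb : 0 < b) :
    Integrable (fun x : EuclideanSpace ℝ (Fin d) =>
      1 - Real.exp (-(b / ‖x‖ ^ α))) := by
  have hnr : (Module.finrank ℝ (EuclideanSpace ℝ (Fin d)) : ℝ) < α := by
    rwa [finrank_euclideanSpace_fin]
  set g : EuclideanSpace ℝ (Fin d) → ℝ := fun x =>
    (Metric.closedBall (0 : EuclideanSpace ℝ (Fin d)) 1).indicator (fun _ => 1) x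
      + (2 ^ α * b) * (1 + ‖x‖) ^ (-α) with hg_def
  have hgint : Integrable g := by
    refine Integrable.add ?_ ?_
    · exact (integrableOn_const (C := (1:ℝ)) measure_closedBall_lt_top.ne).integrable_indicator
        Metric.isClosed_closedBall.measurableSet
    · exact (integrable_one_add_norm hnr).const_mul _
  refine hgint.mono' ?_ ?_
  · exact ((by fun_prop : Measurable fun t : ℝ =>
      1 - Real.exp (-(b / t ^ α))).comp measurable_norm).aestronglyMeasurable
  · refine Filter.Eventually.of_forall fun x => ?_
    have ht0 : 0 ≤ b / ‖x‖ ^ α :=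
      div_nonneg hb.le (Real.rpow_nonneg (norm_nonneg x) α)
    have hf0 : 0 ≤ 1 - Real.exp (-(b / ‖x‖ ^ α)) := one_sub_exp_neg_nonneg ht0
    rw [Real.norm_eq_abs, abs_of_nonneg hf0]
    have h2 : 0 ≤ (2 ^ α * b) * (1 + ‖x‖) ^ (-α) := by positivity
    rcases le_or_gt ‖x‖ 1 with hx | hx
    · have : (Metric.closedBall (0 : EuclideanSpace ℝ (Fin d)) 1).indicator
          (fun _ => (1:ℝ)) x = 1 := by
        rw [indicator_of_mem]
        simpa [Metric.mem_closedBall, dist_eq_norm] using hx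
      rw [hg_def]; dsimp only; rw [this]
      have := one_sub_exp_neg_le_one ht0
      linarith
    · have hx0 : (0:ℝ) < ‖x‖ := lt_trans one_pos hx
      have hind : (Metric.closedBall (0 : EuclideanSpace ℝ (Fin d)) 1).indicator
          (fun _ => (1:ℝ)) x = 0 := by
        rw [indicator_of_notMem]
        simp only [Metric.mem_closedBall, dist_eq_norm]
        rw [sub_zero]; exact not_le.mpr hx
      rw [hg_def]; dsimp only; rw [hind, zero_add]
      refine le_trans one_sub_exp_neg_le_self ?_
      have hpow1 : (0:ℝ) < ‖x‖ ^ α := Real.rpow_pos_of_pos hx0 _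
      have hpow2 : (0:ℝ) < (1 + ‖x‖) ^ α := Real.rpow_pos_of_pos (by linarith) _
      rw [show (2 ^ α * b) * (1 + ‖x‖) ^ (-α) = (2 ^ α * b) / (1 + ‖x‖) ^ α by
        rw [Real.rpow_neg (by linarith), div_eq_mul_inv]]
      rw [div_le_div_iff₀ hpow1 hpow2]
      have hle : (1 + ‖x‖) ^ α ≤ 2 ^ α * ‖x‖ ^ α := by
        rw [← Real.mul_rpow (by norm_num) hx0.le]
        exact Real.rpow_le_rpow (by linarith) (by linarith) hα.le
      calc b * (1 + ‖x‖) ^ α ≤ b * (2 ^ α * ‖x‖ ^ α) :=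
            mul_le_mul_of_nonneg_left hle hb.le
        _ = 2 ^ α * b * ‖x‖ ^ α := by ring

lemma lemG (d : ℕ) (hd : 1 ≤ d) {α : ℝ} (hα : 0 < α) (hαd : (d:ℝ) < α)
    {b : ℝ} (hb : 0 < b) :
    ∫ x : EuclideanSpace ℝ (Fin d), (1 - Real.exp (-(b / ‖x‖ ^ α)))
      = (volume (Metric.ball (0 : EuclideanSpace ℝ (Fin d)) 1)).toReal *
        (b ^ ((d:ℝ)/α) * Real.Gamma (1 - (d:ℝ)/α)) := by
  have hd0 : 0 < (d:ℝ) := by exact_mod_cast hd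
  haveI : Nonempty (Fin d) := Fin.pos_iff_nonempty.mp hd
  haveI : Nontrivial (EuclideanSpace ℝ (Fin d)) := inferInstance
  have key := MeasureTheory.integral_fun_norm_addHaar
    (volume : Measure (EuclideanSpace ℝ (Fin d)))
    (fun r : ℝ => 1 - Real.exp (-(b / r ^ α)))
  rw [finrank_euclideanSpace_fin] at key
  rw [key]
  have hinner : ∫ y in Ioi (0:ℝ), y ^ (d - 1) • (1 - Real.exp (-(b / y ^ α)))
      = b ^ ((d:ℝ)/α) * Real.Gamma (1 - (d:ℝ)/α) / d := by
    rw [← lemI d hα hd0 hαd hb]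
    refine setIntegral_congr_fun measurableSet_Ioi fun y hy => ?_
    have hy0 : (0:ℝ) < y := hy
    rw [smul_eq_mul]
    congr 1
    rw [← Real.rpow_natCast y (d - 1), Nat.cast_sub hd, Nat.cast_one]
  rw [hinner, nsmul_eq_mul, smul_eq_mul]
  have hdne : (d:ℝ) ≠ 0 := hd0.ne'
  field_simp
  rw [measureReal_def]; ring

theorem integral_weighted_pareto_connection_function
    (d k : ℕ) (hd : 1 ≤ d) (α β c : ℝ)
    (hα : 0 < α) (hβ : 0 < β) (hc : 0 < c)
    (hαd : (d : ℝ) < α) (hαβ : ((k : ℝ) + 1) * d < α * β) :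
    ∫ x : EuclideanSpace ℝ (Fin d),
        ∫ w in Ioi (1 : ℝ),
          (1 - Real.exp (-(c * w / ‖x‖ ^ α))) * w ^ ((k : ℝ) * d / α) * (β * w ^ (-β - 1)) =
      (volume (Metric.closedBall (0 : EuclideanSpace ℝ (Fin d)) 1)).toReal *
        (α * β / (α * β - ((k : ℝ) + 1) * d)) * c ^ ((d : ℝ) / α) *
          Real.Gamma (1 - (d : ℝ) / α) := by
  haveI : Nonempty (Fin d) := Fin.pos_iff_nonempty.mp hd
  haveI : Nontrivial (EuclideanSpace ℝ (Fin d)) := inferInstance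
  have hd0 : 0 < (d:ℝ) := by exact_mod_cast hd
  rw [Measure.addHaar_closedBall_eq_addHaar_ball]
  set s : ℝ := (d:ℝ)/α with hs_def
  have hs0 : 0 < s := div_pos hd0 hα
  have hs1 : s < 1 := (div_lt_one hα).mpr hαd
  set p : ℝ := (k:ℝ) * d / α with hp_def
  set q : ℝ := s + p - β - 1 with hq_def
  have hq : q < -1 := by
    have h1 : s + p = ((k:ℝ)+1) * d / α := by rw [hs_def, hp_def]; ring
    have h2 : ((k:ℝ)+1)*d/α < β := (div_lt_iff₀ hα).mpr (by linarith [hαβ])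
    rw [hq_def, h1]; linarith
  set θ : ℝ := (volume (Metric.ball (0 : EuclideanSpace ℝ (Fin d)) 1)).toReal with hθ
  set K : ℝ := θ * Real.Gamma (1 - s) * c ^ s * β with hK
  set F : EuclideanSpace ℝ (Fin d) → ℝ → ℝ := fun x w =>
    (1 - Real.exp (-(c * w / ‖x‖ ^ α))) * w ^ p * (β * w ^ (-β - 1)) with hF
  have hxint : ∀ w : ℝ, 0 < w → (∫ x, F x w) = K * w ^ q := by
    intro w hw
    rw [hF]; dsimp only
    rw [integral_mul_const, integral_mul_const]
    have hb : 0 < c * w := mul_pos hc hw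
    rw [lemG d hd hα hαd hb, Real.mul_rpow hc.le hw.le,
      hK, hq_def, show s + p - β - 1 = s + (p + (-β-1)) by ring,
      Real.rpow_add hw, Real.rpow_add hw]
    ring
  have hF0 : ∀ (x : EuclideanSpace ℝ (Fin d)) (w : ℝ), 0 ≤ w → 0 ≤ F x w := by
    intro x w hw
    have ht0 : 0 ≤ c * w / ‖x‖ ^ α :=
      div_nonneg (mul_nonneg hc.le hw) (Real.rpow_nonneg (norm_nonneg x) α)
    exact mul_nonneg (mul_nonneg (one_sub_exp_neg_nonneg ht0)
      (Real.rpow_nonneg hw _)) (mul_nonneg hβ.le (Real.rpow_nonneg hw _))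
  have hslice : ∀ w : ℝ, 0 < w → Integrable (fun x => F x w) := fun w hw =>
    ((lemGint d hd hα hαd (mul_pos hc hw)).mul_const _).mul_const _
  have hmeas : AEStronglyMeasurable (Function.uncurry F)
      ((volume : Measure (EuclideanSpace ℝ (Fin d))).prod (volume.restrict (Ioi 1))) := by
    apply Measurable.aestronglyMeasurable
    show Measurable fun z : EuclideanSpace ℝ (Fin d) × ℝ =>
      (1 - Real.exp (-(c * z.2 / ‖z.1‖ ^ α))) * z.2 ^ p * (β * z.2 ^ (-β - 1))
    fun_prop
  have hnorm_eq : ∀ᵐ w ∂(volume.restrict (Ioi (1:ℝ))),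
      (∫ x, ‖F x w‖) = K * w ^ q := by
    filter_upwards [ae_restrict_mem measurableSet_Ioi] with w hw
    have hw0 : (0:ℝ) < w := lt_trans one_pos hw
    rw [← hxint w hw0]
    refine integral_congr_ae (Filter.Eventually.of_forall fun x => ?_)
    show ‖F x w‖ = F x w
    rw [Real.norm_eq_abs, abs_of_nonneg (hF0 x w hw0.le)]
  have hK_int : Integrable (fun w => K * w ^ q) (volume.restrict (Ioi 1)) :=
    (integrableOn_Ioi_rpow_of_lt hq one_pos).const_mul K
  have hint : Integrable (Function.uncurry F)
      ((volume : Measure (EuclideanSpace ℝ (Fin d))).prod (volume.restrict (Ioi 1))) := by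
    rw [integrable_prod_iff' hmeas]
    constructor
    · filter_upwards [ae_restrict_mem measurableSet_Ioi] with w hw
      exact hslice w (lt_trans one_pos hw)
    · exact hK_int.congr (hnorm_eq.mono fun w hw => hw.symm)
  calc ∫ x : EuclideanSpace ℝ (Fin d), ∫ w in Ioi (1:ℝ), F x w
      = ∫ w in Ioi (1:ℝ), ∫ x, F x w := integral_integral_swap hint
    _ = ∫ w in Ioi (1:ℝ), K * w ^ q := by
        refine setIntegral_congr_fun measurableSet_Ioi fun w hw => ?_
        exact hxint w (lt_trans one_pos hw)
    _ = K * (-1 / (q + 1)) := by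
        rw [integral_const_mul, integral_Ioi_rpow_of_lt hq one_pos, Real.one_rpow]
    _ = θ * (α * β / (α * β - ((k:ℝ) + 1) * d)) * c ^ s * Real.Gamma (1 - s) := by
        have hpos : 0 < α * β - ((k:ℝ)+1)*d := by linarith
        have hne : α * β - ((k:ℝ)+1)*d ≠ 0 := hpos.ne'
        have hq1 : q + 1 = -((α * β - ((k:ℝ)+1)*d)/α) := by
          rw [hq_def, hs_def, hp_def]; field_simp; ring
        have hinv : (-1 : ℝ) / -((α * β - ((k:ℝ)+1)*d)/α)
            = α / (α * β - ((k:ℝ)+1)*d) := by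
          field_simp
        rw [hq1, hinv, hK]
        ring
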